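/- Let A and B be real N×N positive semidefinite symmetric matrices and let P : H → H be defined on a Hilbert space by P Q = Σⱼ ⟨Q, φⱼ⟩ ψⱼ, where (ψⱼ) has Gram matrix K_Ψ and (φⱼ) has Gram matrix K_Φ. Then the operator norm of P satisfies ‖P‖ ≤ √(‖K_Ψ‖ · ‖K_Φ‖), where matrix norms are spectral norms. -/

import Mathlib

open RealInnerProductSpace

theorem stmt_17 {H : Type*} [NormedAddCommGroup H] [InnerProductSpace ℝ H]
    [CompleteSpace H] (N : ℕ) (hN : 0 < N) (ψ φ : Fin N → H)
    (KΨ KΦ : Matrix (Fin N) (Fin N) ℝ)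
    (hKΨ : ∀ i j, KΨ i j = ⟪ψ i, ψ j⟫)
    (hKΦ : ∀ i j, KΦ i j = ⟪φ i, φ j⟫)
    (P : H →L[ℝ] H) (hP : ∀ Q, P Q = ∑ j, ⟪Q, φ j⟫ • ψ j) :
    ‖P‖ ≤ Real.sqrt (‖Matrix.toEuclideanCLM (𝕜 := ℝ) KΨ‖ *
      ‖Matrix.toEuclideanCLM (𝕜 := ℝ) KΦ‖) := by
  set MΨ := Matrix.toEuclideanCLM (𝕜 := ℝ) KΨ
  set MΦ := Matrix.toEuclideanCLM (𝕜 := ℝ) KΦ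
  -- analysis operator
  set T : H →L[ℝ] EuclideanSpace ℝ (Fin N) :=
    (PiLp.continuousLinearEquiv 2 ℝ (fun _ : Fin N => ℝ)).symm.toContinuousLinearMap.comp
      (ContinuousLinearMap.pi (fun i => innerSL ℝ (φ i))) with hT
  have hTapp : ∀ (Q : H) (i : Fin N), T Q i = ⟪Q, φ i⟫ := by
    intro Q i
    simp [hT, real_inner_comm]
  -- synthesis operator S
  set S : EuclideanSpace ℝ (Fin N) →L[ℝ] H :=
    ∑ j, (ContinuousLinearMap.smulRight
      ((PiLp.proj 2 (fun _ : Fin N => ℝ) j : _ →L[ℝ] ℝ)) (φ j)) with hS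
  have hSapp : ∀ c : EuclideanSpace ℝ (Fin N), S c = ∑ j, c j • φ j := by
    intro c
    simp [hS, ContinuousLinearMap.sum_apply]
  have hadj : ContinuousLinearMap.adjoint T = S := by
    symm
    rw [ContinuousLinearMap.eq_adjoint_iff]
    intro c Q
    rw [hSapp]
    rw [sum_inner]
    rw [PiLp.inner_apply]
    refine Finset.sum_congr rfl fun j _ => ?_
    rw [hTapp, real_inner_smul_left]
    simp [real_inner_comm]
    ring
  have hTS : T.comp S = MΦ := by
    ext c i
    rw [ContinuousLinearMap.comp_apply, hTapp, hSapp, sum_inner]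
    have : MΦ c i = ∑ j, KΦ i j * c j := by
      simpa [Matrix.mulVec, dotProduct, -Matrix.ofLp_toEuclideanCLM] using
        congrFun (Matrix.ofLp_toEuclideanCLM (𝕜 := ℝ) KΦ c) i
    rw [this]
    refine Finset.sum_congr rfl fun j _ => ?_
    rw [real_inner_smul_left, hKΦ, real_inner_comm]
    ring
  have hTnorm : ‖T‖ * ‖T‖ = ‖MΦ‖ := by
    rw [← hTS, ← hadj]
    have h := ContinuousLinearMap.norm_adjoint_comp_self (ContinuousLinearMap.adjoint T)
    rw [ContinuousLinearMap.adjoint_adjoint] at h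
    rw [h, ContinuousLinearMap.adjoint.norm_map]
  have hMΦ0 : (0:ℝ) ≤ ‖MΦ‖ := norm_nonneg _
  have hMΨ0 : (0:ℝ) ≤ ‖MΨ‖ := norm_nonneg _
  refine P.opNorm_le_bound (Real.sqrt_nonneg _) fun Q => ?_
  -- key: ‖P Q‖^2 = ⟪T Q, MΨ (T Q)⟫
  have key : ‖P Q‖ ^ 2 = ⟪(T Q), MΨ (T Q)⟫ := by
    rw [← real_inner_self_eq_norm_sq, hP]
    rw [sum_inner]
    have : MΨ (T Q) = fun i => ∑ j, KΨ i j * T Q j := by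
      funext i
      simpa [Matrix.mulVec, dotProduct, -Matrix.ofLp_toEuclideanCLM] using
        congrFun (Matrix.ofLp_toEuclideanCLM (𝕜 := ℝ) KΨ (T Q)) i
    rw [PiLp.inner_apply]
    refine Finset.sum_congr rfl fun i _ => ?_
    rw [real_inner_smul_left, inner_sum, this, hTapp]
    simp only [RCLike.inner_apply, starRingEnd_apply, star_trivial]
    rw [Finset.mul_sum, Finset.sum_mul]
    refine Finset.sum_congr rfl fun j _ => ?_
    rw [real_inner_smul_right, hKΨ, hTapp]
    ring
  have h1 : ‖P Q‖ ^ 2 ≤ ‖MΨ‖ * ‖T Q‖ ^ 2 := by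
    rw [key]
    calc ⟪(T Q), MΨ (T Q)⟫ ≤ ‖T Q‖ * ‖MΨ (T Q)‖ := real_inner_le_norm _ _
      _ ≤ ‖T Q‖ * (‖MΨ‖ * ‖T Q‖) := by
          gcongr; exact MΨ.le_opNorm _
      _ = ‖MΨ‖ * ‖T Q‖ ^ 2 := by ring
  have h2 : ‖T Q‖ ^ 2 ≤ ‖MΦ‖ * ‖Q‖ ^ 2 := by
    have := T.le_opNorm Q
    calc ‖T Q‖ ^ 2 ≤ (‖T‖ * ‖Q‖)^2 := by
          apply pow_le_pow_left₀ (norm_nonneg _) this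
      _ = (‖T‖*‖T‖) * ‖Q‖^2 := by ring
      _ = ‖MΦ‖ * ‖Q‖^2 := by rw [hTnorm]
  have h3 : ‖P Q‖ ^ 2 ≤ (‖MΨ‖ * ‖MΦ‖) * ‖Q‖ ^ 2 := by
    calc ‖P Q‖ ^ 2 ≤ ‖MΨ‖ * ‖T Q‖ ^ 2 := h1
      _ ≤ ‖MΨ‖ * (‖MΦ‖ * ‖Q‖ ^ 2) := by gcongr
      _ = (‖MΨ‖ * ‖MΦ‖) * ‖Q‖ ^ 2 := by ring
  have : ‖P Q‖ ≤ Real.sqrt ((‖MΨ‖ * ‖MΦ‖) * ‖Q‖ ^ 2) := by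
    rw [← Real.sqrt_sq (norm_nonneg (P Q))]
    exact Real.sqrt_le_sqrt h3
  calc ‖P Q‖ ≤ Real.sqrt ((‖MΨ‖ * ‖MΦ‖) * ‖Q‖ ^ 2) := this
    _ = Real.sqrt (‖MΨ‖ * ‖MΦ‖) * ‖Q‖ := by
        rw [Real.sqrt_mul (by positivity), Real.sqrt_sq (norm_nonneg _)]
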